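/- Let σ₁, σ₂ be spectral functions and suppose c := sup_{0≤α<1} (∫_α¹ σ₂(u) du)/(∫_α¹ σ₁(u) du) < ∞. Then for every Y ∈ L_{σ₁}, ‖Y‖_{σ₂} ≤ c · ‖Y‖_{σ₁}, and hence L_{σ₁} ⊆ L_{σ₂}. -/

import Mathlib

open MeasureTheory ENNReal

/-- The (left-continuous) quantile function of X: F_X^{-1}(p) = inf{y : P(X ≤ y) ≥ p}. -/
noncomputable def quantile {Ω : Type*} [MeasurableSpace Ω] (μ : Measure Ω)
    (X : Ω → ℝ) (p : ℝ) : ℝ :=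
  sInf {y : ℝ | p ≤ (μ {ω | X ω ≤ y}).toReal}

/-- The σ-norm ‖Y‖_σ = ∫₀¹ σ(u)·F_{|Y|}^{-1}(u) du, valued in [0,∞]. -/
noncomputable def sigmaNorm {Ω : Type*} [MeasurableSpace Ω] (μ : Measure Ω)
    (σ : ℝ → ℝ) (Y : Ω → ℝ) : ℝ≥0∞ :=
  ∫⁻ u in Set.Ioo (0 : ℝ) 1, ENNReal.ofReal (σ u * quantile μ (fun ω => |Y ω|) u)

/-- The Average Value-at-Risk at level α. -/
noncomputable def avar {Ω : Type*} [MeasurableSpace Ω] (μ : Measure Ω)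
    (X : Ω → ℝ) (α : ℝ) : ℝ :=
  (1 - α)⁻¹ * ∫ u in α..1, quantile μ X u

section Aux

variable {Ω : Type*} [MeasurableSpace Ω] (μ : Measure Ω)

/-- For p > 0, every element of the quantile defining set is nonnegative. -/
lemma quantile_set_nonneg (Y : Ω → ℝ) {p : ℝ} (hp : 0 < p) :
    ∀ y ∈ {y : ℝ | p ≤ (μ {ω | |Y ω| ≤ y}).toReal}, (0:ℝ) ≤ y := by
  intro y hy
  by_contra hy0
  push_neg at hy0
  have hempty : {ω | |Y ω| ≤ y} = ∅ := by
    ext ω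
    simp only [Set.mem_setOf_eq, Set.mem_empty_iff_false, iff_false, not_le]
    exact lt_of_lt_of_le hy0 (abs_nonneg _)
  rw [Set.mem_setOf_eq, hempty, measure_empty] at hy
  simp only [ENNReal.toReal_zero] at hy
  linarith

lemma quantile_set_nonempty [IsProbabilityMeasure μ] (Y : Ω → ℝ) {p : ℝ} (hp : p < 1) :
    ({y : ℝ | p ≤ (μ {ω | |Y ω| ≤ y}).toReal}).Nonempty := by
  rcases le_or_gt p 0 with h0 | h0
  · exact ⟨0, le_trans h0 ENNReal.toReal_nonneg⟩
  · have hmono : Monotone (fun n : ℕ => {ω | |Y ω| ≤ (n:ℝ)}) := by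
      intro m n hmn ω hω
      simp only [Set.mem_setOf_eq] at hω ⊢
      exact le_trans hω (Nat.cast_le.mpr hmn)
    have hUnion : (⋃ n : ℕ, {ω | |Y ω| ≤ (n:ℝ)}) = Set.univ := by
      ext ω
      simp only [Set.mem_iUnion, Set.mem_setOf_eq, Set.mem_univ, iff_true]
      exact exists_nat_ge |Y ω|
    have htend := tendsto_measure_iUnion_atTop (μ := μ) hmono
    rw [hUnion, measure_univ] at htend
    have hlt : ENNReal.ofReal p < 1 := ENNReal.ofReal_lt_one.mpr hp
    obtain ⟨n, hn⟩ := (htend.eventually (eventually_gt_nhds hlt)).exists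
    refine ⟨(n:ℝ), ?_⟩
    exact (ENNReal.ofReal_le_iff_le_toReal (measure_ne_top μ _)).mp hn.le

lemma quantile_nonneg (Y : Ω → ℝ) {p : ℝ} (hp : 0 < p) :
    0 ≤ quantile μ (fun ω => |Y ω|) p :=
  Real.sInf_nonneg (quantile_set_nonneg μ Y hp)

lemma quantile_mono [IsProbabilityMeasure μ] (Y : Ω → ℝ) {p p' : ℝ}
    (hp : 0 < p) (hpp : p ≤ p') (hp1 : p' < 1) :
    quantile μ (fun ω => |Y ω|) p ≤ quantile μ (fun ω => |Y ω|) p' := by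
  apply csInf_le_csInf ⟨0, quantile_set_nonneg μ Y hp⟩ (quantile_set_nonempty μ Y hp1)
  intro y hy
  exact le_trans hpp hy

/-- Layer-cake representation of the sigma norm. -/
lemma sigmaNorm_eq_layercake [IsProbabilityMeasure μ] (σ : ℝ → ℝ)
    (hσ0 : ∀ u ∈ Set.Icc (0 : ℝ) 1, 0 ≤ σ u) (hσm : MonotoneOn σ (Set.Icc (0 : ℝ) 1))
    (Y : Ω → ℝ) :
    sigmaNorm μ σ Y = ∫⁻ t in Set.Ioi (0:ℝ),
      ((volume.restrict (Set.Ioo (0:ℝ) 1)).withDensity fun u => ENNReal.ofReal (σ u))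
        {u : ℝ | t < quantile μ (fun ω => |Y ω|) u} := by
  set q : ℝ → ℝ := quantile μ (fun ω => |Y ω|) with hq
  set vol : Measure ℝ := volume.restrict (Set.Ioo (0:ℝ) 1) with hvol
  have hqm : MonotoneOn q (Set.Ioo (0:ℝ) 1) := fun a ha b hb hab =>
    quantile_mono μ Y ha.1 hab hb.2
  have hqae : AEMeasurable q vol :=
    aemeasurable_restrict_of_monotoneOn measurableSet_Ioo hqm
  have hgae : AEMeasurable (fun u => ENNReal.ofReal (σ u)) vol :=
    ENNReal.measurable_ofReal.comp_aemeasurable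
      (aemeasurable_restrict_of_monotoneOn measurableSet_Ioo (hσm.mono Set.Ioo_subset_Icc_self))
  have h1 : sigmaNorm μ σ Y
      = ∫⁻ u, ENNReal.ofReal (σ u) * ENNReal.ofReal (q u) ∂vol := by
    rw [sigmaNorm]
    apply setLIntegral_congr_fun measurableSet_Ioo
    intro u hu
    exact ENNReal.ofReal_mul (hσ0 u ⟨hu.1.le, hu.2.le⟩)
  have h2 : ∫⁻ u, ENNReal.ofReal (q u)
        ∂(vol.withDensity fun u => ENNReal.ofReal (σ u))
      = ∫⁻ u, ENNReal.ofReal (σ u) * ENNReal.ofReal (q u) ∂vol := by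
    have hqoae : AEMeasurable (fun u => ENNReal.ofReal (q u)) vol :=
      ENNReal.measurable_ofReal.comp_aemeasurable hqae
    rw [lintegral_withDensity_eq_lintegral_mul₀ hgae hqoae]
    rfl
  have hnn : 0 ≤ᵐ[vol.withDensity fun u => ENNReal.ofReal (σ u)] q := by
    have hvnn : ∀ᵐ u ∂vol, 0 ≤ q u := by
      rw [hvol]
      filter_upwards [self_mem_ae_restrict measurableSet_Ioo] with u hu
      exact quantile_nonneg μ Y hu.1
    exact hvnn.filter_mono (withDensity_absolutelyContinuous vol _).ae_le
  have h3 := lintegral_eq_lintegral_meas_lt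
    (vol.withDensity fun u => ENNReal.ofReal (σ u)) hnn
    (hqae.mono' (withDensity_absolutelyContinuous vol _))
  rw [h1, ← h2, h3]

end Aux

/-- if c bounds the ratios of tail integrals of the spectral functions σ₂, σ₁,
then ‖Y‖_{σ₂} ≤ c‖Y‖_{σ₁} for every Y, hence L_{σ₁} ⊆ L_{σ₂}. -/
theorem stmt8 {Ω : Type*} [MeasurableSpace Ω] (μ : Measure Ω) [IsProbabilityMeasure μ]
    (σ₁ σ₂ : ℝ → ℝ)
    (hσ₁0 : ∀ u ∈ Set.Icc (0 : ℝ) 1, 0 ≤ σ₁ u) (hσ₁m : MonotoneOn σ₁ (Set.Icc (0 : ℝ) 1))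
    (hσ₁1 : (∫ u in (0 : ℝ)..1, σ₁ u) = 1)
    (hσ₂0 : ∀ u ∈ Set.Icc (0 : ℝ) 1, 0 ≤ σ₂ u) (hσ₂m : MonotoneOn σ₂ (Set.Icc (0 : ℝ) 1))
    (hσ₂1 : (∫ u in (0 : ℝ)..1, σ₂ u) = 1)
    (c : ℝ)
    (hc : ∀ α ∈ Set.Ico (0 : ℝ) 1, (∫ u in α..1, σ₂ u) ≤ c * ∫ u in α..1, σ₁ u)
    (Y : Ω → ℝ) (hYm : Measurable Y) (hY : sigmaNorm μ σ₁ Y < ⊤) :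
    sigmaNorm μ σ₂ Y ≤ ENNReal.ofReal c * sigmaNorm μ σ₁ Y := by
  have hc0 : (0:ℝ) ≤ c := by
    have h := hc 0 ⟨le_rfl, one_pos⟩
    rw [hσ₂1, hσ₁1, mul_one] at h
    linarith
  set q : ℝ → ℝ := quantile μ (fun ω => |Y ω|) with hq
  set I : Set ℝ := Set.Ioo (0:ℝ) 1 with hI
  set vol : Measure ℝ := volume.restrict I with hvol
  set ν₁ : Measure ℝ := vol.withDensity fun u => ENNReal.ofReal (σ₁ u) with hν₁
  set ν₂ : Measure ℝ := vol.withDensity fun u => ENNReal.ofReal (σ₂ u) with hν₂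
  have hqm : MonotoneOn q I := fun a ha b hb hab => quantile_mono μ Y ha.1 hab hb.2
  -- tail integral comparison
  have tail_bound : ∀ α : ℝ, 0 ≤ α → α < 1 →
      (∫⁻ u in Set.Icc α 1, ENNReal.ofReal (σ₂ u))
        ≤ ENNReal.ofReal c * ∫⁻ u in Set.Ioo α 1, ENNReal.ofReal (σ₁ u) := by
    intro α hα0 hα1
    have huIcc : Set.uIcc α 1 = Set.Icc α 1 := Set.uIcc_of_le hα1.le
    have hi₁ : IntervalIntegrable σ₁ volume α 1 := by
      apply MonotoneOn.intervalIntegrable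
      rw [huIcc]
      exact hσ₁m.mono (Set.Icc_subset_Icc hα0 le_rfl)
    have hi₂ : IntervalIntegrable σ₂ volume α 1 := by
      apply MonotoneOn.intervalIntegrable
      rw [huIcc]
      exact hσ₂m.mono (Set.Icc_subset_Icc hα0 le_rfl)
    have hnn₂ : 0 ≤ᵐ[volume.restrict (Set.Ioc α 1)] σ₂ := by
      filter_upwards [self_mem_ae_restrict measurableSet_Ioc] with u hu
      exact hσ₂0 u ⟨le_trans hα0 hu.1.le, hu.2⟩
    have hnn₁ : 0 ≤ᵐ[volume.restrict (Set.Ioc α 1)] σ₁ := by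
      filter_upwards [self_mem_ae_restrict measurableSet_Ioc] with u hu
      exact hσ₁0 u ⟨le_trans hα0 hu.1.le, hu.2⟩
    have e₂ : (∫⁻ u in Set.Icc α 1, ENNReal.ofReal (σ₂ u))
        = ENNReal.ofReal (∫ u in α..1, σ₂ u) := by
      rw [setLIntegral_congr (MeasureTheory.Ioc_ae_eq_Icc (μ := volume) (a := α) (b := 1)).symm,
        intervalIntegral.integral_of_le hα1.le,
        ofReal_integral_eq_lintegral_ofReal hi₂.1 hnn₂]
    have e₁ : (∫⁻ u in Set.Ioo α 1, ENNReal.ofReal (σ₁ u))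
        = ENNReal.ofReal (∫ u in α..1, σ₁ u) := by
      rw [setLIntegral_congr (MeasureTheory.Ioo_ae_eq_Ioc (μ := volume) (a := α) (b := 1)),
        intervalIntegral.integral_of_le hα1.le,
        ofReal_integral_eq_lintegral_ofReal hi₁.1 hnn₁]
    rw [e₂, e₁, ← ENNReal.ofReal_mul hc0]
    exact ENNReal.ofReal_le_ofReal (hc α ⟨hα0, hα1⟩)
  -- ν₂ of complement of I is zero
  have hν₂c : ν₂ Iᶜ = 0 := by
    rw [hν₂, withDensity_apply _ measurableSet_Ioo.compl, hvol,
      Measure.restrict_restrict measurableSet_Ioo.compl, Set.compl_inter_self,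
      Measure.restrict_empty, lintegral_zero_measure]
  -- pointwise layer bound
  have key : ∀ t : ℝ, ν₂ {u : ℝ | t < q u} ≤ ENNReal.ofReal c * ν₁ {u : ℝ | t < q u} := by
    intro t
    set A : Set ℝ := {u : ℝ | t < q u} with hA
    set B : Set ℝ := A ∩ I with hB
    rcases Set.eq_empty_or_nonempty B with hBe | hBne
    · have hAsub : A ⊆ Iᶜ := fun u hu huI =>
        Set.eq_empty_iff_forall_notMem.mp hBe u ⟨hu, huI⟩
      calc ν₂ A ≤ ν₂ Iᶜ := measure_mono hAsub
        _ = 0 := hν₂c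
        _ ≤ _ := zero_le
    · set α : ℝ := sInf B with hα
      have hBlb : ∀ b ∈ B, (0:ℝ) ≤ b := fun b hb => hb.2.1.le
      have hbdd : BddBelow B := ⟨0, hBlb⟩
      have hα0 : 0 ≤ α := le_csInf hBne hBlb
      obtain ⟨b₀, hb₀⟩ := hBne
      have hα1 : α < 1 := lt_of_le_of_lt (csInf_le hbdd hb₀) hb₀.2.2
      have hIooB : Set.Ioo α 1 ⊆ B := by
        intro u hu
        obtain ⟨b, hbB, hbu⟩ := exists_lt_of_csInf_lt ⟨b₀, hb₀⟩ hu.1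
        have huI : u ∈ I := ⟨lt_trans hbB.2.1 hbu, hu.2⟩
        exact ⟨lt_of_lt_of_le hbB.1 (hqm hbB.2 huI hbu.le), huI⟩
      have hIooI : Set.Ioo α 1 ⊆ I := Set.Ioo_subset_Ioo hα0 le_rfl
      have hAsub : A ⊆ B ∪ Iᶜ := fun u hu => by
        by_cases h : u ∈ I
        · exact Or.inl ⟨hu, h⟩
        · exact Or.inr h
      have hBIcc : B ⊆ Set.Icc α 1 := fun b hb => ⟨csInf_le hbdd hb, hb.2.2.le⟩
      calc ν₂ A ≤ ν₂ B + ν₂ Iᶜ := le_trans (measure_mono hAsub) (measure_union_le _ _)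
        _ = ν₂ B := by rw [hν₂c, add_zero]
        _ ≤ ν₂ (Set.Icc α 1) := measure_mono hBIcc
        _ = ∫⁻ u in Set.Icc α 1, ENNReal.ofReal (σ₂ u) ∂vol :=
            withDensity_apply _ measurableSet_Icc
        _ ≤ ∫⁻ u in Set.Icc α 1, ENNReal.ofReal (σ₂ u) := by
            rw [hvol, Measure.restrict_restrict measurableSet_Icc]
            exact lintegral_mono' (Measure.restrict_mono Set.inter_subset_left le_rfl) le_rfl
        _ ≤ ENNReal.ofReal c * ∫⁻ u in Set.Ioo α 1, ENNReal.ofReal (σ₁ u) :=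
            tail_bound α hα0 hα1
        _ = ENNReal.ofReal c * ν₁ (Set.Ioo α 1) := by
            rw [hν₁, withDensity_apply _ measurableSet_Ioo, hvol,
              Measure.restrict_restrict measurableSet_Ioo, Set.inter_eq_left.mpr hIooI]
        _ ≤ ENNReal.ofReal c * ν₁ A :=
            mul_le_mul_right (measure_mono fun u hu => (hIooB hu).1) _
  rw [sigmaNorm_eq_layercake μ σ₂ hσ₂0 hσ₂m Y, sigmaNorm_eq_layercake μ σ₁ hσ₁0 hσ₁m Y]
  calc (∫⁻ t in Set.Ioi (0:ℝ), ν₂ {u : ℝ | t < q u})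
      ≤ ∫⁻ t in Set.Ioi (0:ℝ), ENNReal.ofReal c * ν₁ {u : ℝ | t < q u} :=
        lintegral_mono fun t => key t
    _ = ENNReal.ofReal c * ∫⁻ t in Set.Ioi (0:ℝ), ν₁ {u : ℝ | t < q u} :=
        lintegral_const_mul' _ _ ENNReal.ofReal_ne_top
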